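/- Let a and b be coprime nonzero integers with ab even, and let ℓ = 2^β · d be a positive integer with d odd, β ≥ 0 and gcd(d, ab) = 1. Then ℓ ∈ G_{(a,b)} if and only if one of the following holds: (a) β = 0 and d = 1; (b) β = 0, d ≥ 3, and there exists s ≥ 1 such that 2^s || ord_p(a/b) for every prime p dividing d. -/

import Mathlib

/-- `d ∈ G_{(a,b)}`: the positive integer `d` divides `a^k + b^k` for some integer `k ≥ 1`. -/
def Good (a b : ℤ) (d : ℕ) : Prop := ∃ k : ℕ, 1 ≤ k ∧ (d : ℤ) ∣ a ^ k + b ^ k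

/-- `ord_n(a/b)`: the multiplicative order of `a·b⁻¹` modulo `n`. -/
noncomputable def ordAB (a b : ℤ) (n : ℕ) : ℕ :=
  orderOf ((a : ZMod n) * (b : ZMod n)⁻¹)

section Aux

variable {a b : ℤ}

lemma isUnit_cast {n : ℕ} (h : IsCoprime (n : ℤ) b) : IsUnit ((b : ZMod n)) := by
  obtain ⟨u, v, huv⟩ := h
  have h1 : ((u * n + v * b : ℤ) : ZMod n) = ((1 : ℤ) : ZMod n) := by rw [huv]
  push_cast at h1
  rw [ZMod.natCast_self, mul_zero, zero_add] at h1
  exact IsUnit.of_mul_eq_one _ ((mul_comm _ _).trans h1)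

lemma bridge {n : ℕ} (hbu : IsUnit ((b : ZMod n))) (k : ℕ) (c : ZMod n) :
    ((a : ZMod n) * (b : ZMod n)⁻¹) ^ k = c ↔ (a : ZMod n) ^ k = c * (b : ZMod n) ^ k := by
  rw [mul_pow]
  have h1 : ((b : ZMod n)⁻¹) ^ k * (b : ZMod n) ^ k = 1 := by
    rw [← mul_pow, ZMod.inv_mul_of_unit _ hbu, one_pow]
  have h2 : (b : ZMod n) ^ k * ((b : ZMod n)⁻¹) ^ k = 1 := by
    rw [← mul_pow, ZMod.mul_inv_of_unit _ hbu, one_pow]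
  constructor
  · intro h
    calc (a : ZMod n) ^ k
        = (a : ZMod n) ^ k * (((b : ZMod n)⁻¹) ^ k * (b : ZMod n) ^ k) := by
          rw [h1, mul_one]
      _ = c * (b : ZMod n) ^ k := by rw [← mul_assoc, h]
  · intro h
    rw [h, mul_assoc, h2, mul_one]

lemma dvd_add_iff {n : ℕ} (hbu : IsUnit ((b : ZMod n))) (k : ℕ) :
    ((n : ℕ) : ℤ) ∣ a ^ k + b ^ k ↔ ((a : ZMod n) * (b : ZMod n)⁻¹) ^ k = -1 := by
  have hcast : ((a ^ k + b ^ k : ℤ) : ZMod n) = (a : ZMod n) ^ k + (b : ZMod n) ^ k := by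
    push_cast; ring
  rw [← ZMod.intCast_zmod_eq_zero_iff_dvd, hcast, bridge hbu, neg_one_mul,
    eq_neg_iff_add_eq_zero]

lemma dvd_sub_iff {n : ℕ} (hbu : IsUnit ((b : ZMod n))) (k : ℕ) :
    ((n : ℕ) : ℤ) ∣ a ^ k - b ^ k ↔ ((a : ZMod n) * (b : ZMod n)⁻¹) ^ k = 1 := by
  have hcast : ((a ^ k - b ^ k : ℤ) : ZMod n) = (a : ZMod n) ^ k - (b : ZMod n) ^ k := by
    push_cast; ring
  rw [← ZMod.intCast_zmod_eq_zero_iff_dvd, hcast, bridge hbu, one_mul, sub_eq_zero]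

lemma ordAB_pos {n : ℕ} (hn : n ≠ 0) (hca : IsCoprime (n : ℤ) a) (hcb : IsCoprime (n : ℤ) b) :
    0 < ordAB a b n := by
  haveI : NeZero n := ⟨hn⟩
  have hua : IsUnit ((a : ZMod n)) := isUnit_cast hca
  have hub : IsUnit ((b : ZMod n)) := isUnit_cast hcb
  have hubi : IsUnit ((b : ZMod n)⁻¹) :=
    IsUnit.of_mul_eq_one _ (ZMod.inv_mul_of_unit _ hub)
  obtain ⟨u, hu⟩ := hua.mul hubi
  rw [ordAB, ← hu, orderOf_units]
  exact orderOf_pos u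

lemma geom_dvd (p : ℕ) (hp : p.Prime) {C D : ℤ} (h : (p : ℤ) ∣ C - D) :
    (p : ℤ) ∣ ∑ i ∈ Finset.range p, C ^ i * D ^ (p - 1 - i) := by
  have hCD : (C : ZMod p) = (D : ZMod p) := by
    have h0 := (ZMod.intCast_zmod_eq_zero_iff_dvd (C - D) p).mpr h
    push_cast at h0
    exact sub_eq_zero.mp h0
  rw [← ZMod.intCast_zmod_eq_zero_iff_dvd]
  push_cast
  calc (∑ i ∈ Finset.range p, (C : ZMod p) ^ i * (D : ZMod p) ^ (p - 1 - i))
      = ∑ _i ∈ Finset.range p, (C : ZMod p) ^ (p - 1) := by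
        refine Finset.sum_congr rfl fun i hi => ?_
        rw [← hCD, ← pow_add]
        congr 1
        have := Finset.mem_range.mp hi
        omega
    _ = (p : ZMod p) * (C : ZMod p) ^ (p - 1) := by
        rw [Finset.sum_const, Finset.card_range, nsmul_eq_mul]
    _ = 0 := by rw [ZMod.natCast_self, zero_mul]

lemma pow_dvd_pow_sub_pow (p : ℕ) (hp : p.Prime) {C D : ℤ} (h : (p : ℤ) ∣ C - D) (e : ℕ) :
    (p : ℤ) ^ (e + 1) ∣ C ^ (p ^ e) - D ^ (p ^ e) := by
  induction e with
  | zero => simpa using h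
  | succ e ih =>
    have hAB : (p : ℤ) ∣ C ^ (p ^ e) - D ^ (p ^ e) :=
      dvd_trans (dvd_pow_self _ (Nat.succ_ne_zero e)) ih
    have hgeom := geom_dvd p hp hAB
    have key : C ^ (p ^ (e + 1)) - D ^ (p ^ (e + 1))
        = (∑ i ∈ Finset.range p, (C ^ (p ^ e)) ^ i * (D ^ (p ^ e)) ^ (p - 1 - i)) *
          (C ^ (p ^ e) - D ^ (p ^ e)) := by
      rw [geom_sum₂_mul, ← pow_mul, ← pow_mul, pow_succ]
    rw [key, pow_succ']
    exact mul_dvd_mul hgeom ih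

lemma ord_claims {p e : ℕ} (hp : p.Prime) (he : 1 ≤ e)
    (hca : IsCoprime ((p : ℤ)) a) (hcb : IsCoprime ((p : ℤ)) b) :
    ordAB a b p ∣ ordAB a b (p ^ e) ∧ ordAB a b (p ^ e) ∣ ordAB a b p * p ^ (e - 1) := by
  have hcbe : IsCoprime (((p ^ e : ℕ)) : ℤ) b := by push_cast; exact hcb.pow_left
  have hub : IsUnit ((b : ZMod p)) := isUnit_cast hcb
  have hube : IsUnit ((b : ZMod (p ^ e))) := isUnit_cast hcbe
  constructor
  · have h1 : ((p ^ e : ℕ) : ℤ) ∣ a ^ (ordAB a b (p ^ e)) - b ^ (ordAB a b (p ^ e)) :=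
      (dvd_sub_iff hube _).mpr (pow_orderOf_eq_one _)
    have h2 : ((p : ℕ) : ℤ) ∣ a ^ (ordAB a b (p ^ e)) - b ^ (ordAB a b (p ^ e)) := by
      refine dvd_trans ?_ h1
      exact_mod_cast Int.natCast_dvd_natCast.mpr (dvd_pow_self p (by omega))
    exact orderOf_dvd_iff_pow_eq_one.mpr ((dvd_sub_iff hub _).mp h2)
  · set m := ordAB a b p with hm
    have h1 : (p : ℤ) ∣ a ^ m - b ^ m :=
      (dvd_sub_iff hub _).mpr (pow_orderOf_eq_one _)
    have h2 := pow_dvd_pow_sub_pow p hp h1 (e - 1)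
    rw [← pow_mul, ← pow_mul] at h2
    have he1 : e - 1 + 1 = e := by omega
    rw [he1] at h2
    have h3 : ((p ^ e : ℕ) : ℤ) ∣ a ^ (m * p ^ (e - 1)) - b ^ (m * p ^ (e - 1)) := by
      push_cast; exact h2
    exact orderOf_dvd_iff_pow_eq_one.mpr ((dvd_sub_iff hube _).mp h3)

lemma v2_eq_of_dvd {t k : ℕ} (ht : t ≠ 0) (hk : k ≠ 0) (h2 : t ∣ 2 * k) (h1 : ¬ t ∣ k) :
    t.factorization 2 = k.factorization 2 + 1 := by
  have h2k : (2 * k) ≠ 0 := mul_ne_zero two_ne_zero hk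
  have hle := (Nat.factorization_le_iff_dvd ht h2k).mpr h2
  have hfm : (2 * k).factorization = (2 : ℕ).factorization + k.factorization :=
    Nat.factorization_mul two_ne_zero hk
  have h2f : (2 : ℕ).factorization = Finsupp.single 2 1 := Nat.Prime.factorization Nat.prime_two
  have hle2 : t.factorization 2 ≤ k.factorization 2 + 1 := by
    have := Finsupp.le_def.mp hle 2
    rw [hfm] at this
    simp [h2f] at this
    omega
  rcases Nat.lt_or_ge (t.factorization 2) (k.factorization 2 + 1) with hlt | hge
  · exfalso
    apply h1
    rw [← Nat.factorization_le_iff_dvd ht hk]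
    rw [Finsupp.le_def]
    intro q
    have hq := Finsupp.le_def.mp hle q
    rw [hfm] at hq
    by_cases hq2 : q = 2
    · subst hq2; omega
    · simpa [h2f, Finsupp.single_eq_of_ne' (Ne.symm hq2)] using hq
  · omega

lemma eq_neg_one_of_sq {p e : ℕ} (hp : p.Prime) (hp2 : p ≠ 2) (he : 1 ≤ e)
    {y : ZMod (p ^ e)} (h2 : y ^ 2 = 1) (h1 : y ≠ 1) : y = -1 := by
  obtain ⟨c, rfl⟩ := ZMod.intCast_surjective y
  have hd : ((p ^ e : ℕ) : ℤ) ∣ (c - 1) * (c + 1) := by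
    have h0 : ((c ^ 2 - 1 : ℤ) : ZMod (p ^ e)) = 0 := by push_cast; rw [h2]; ring
    have h3 := (ZMod.intCast_zmod_eq_zero_iff_dvd _ _).mp h0
    have h4 : c ^ 2 - 1 = (c - 1) * (c + 1) := by ring
    rwa [h4] at h3
  rw [Nat.cast_pow] at hd
  have hprime : Prime ((p : ℤ)) := Nat.prime_iff_prime_int.mp hp
  by_cases hc1 : (p : ℤ) ∣ c - 1
  · exfalso
    apply h1
    have hc2 : ¬ (p : ℤ) ∣ c + 1 := by
      intro h
      have hdvd2 : (p : ℤ) ∣ 2 := by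
        have := dvd_sub h hc1
        simpa using this
      have : (p : ℕ) ∣ 2 := by exact_mod_cast hdvd2
      exact hp2 ((Nat.prime_dvd_prime_iff_eq hp Nat.prime_two).mp this)
    have hcop : IsCoprime ((p : ℤ) ^ e) (c + 1) :=
      (hprime.coprime_iff_not_dvd.mpr hc2).pow_left
    have hfin : (p : ℤ) ^ e ∣ c - 1 := hcop.dvd_of_dvd_mul_right hd
    have h5 : ((c - 1 : ℤ) : ZMod (p ^ e)) = 0 := by
      rw [ZMod.intCast_zmod_eq_zero_iff_dvd]
      push_cast
      exact hfin
    push_cast at h5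
    linear_combination h5
  · have hcop : IsCoprime ((p : ℤ) ^ e) (c - 1) :=
      (hprime.coprime_iff_not_dvd.mpr hc1).pow_left
    have hfin : (p : ℤ) ^ e ∣ c + 1 := hcop.dvd_of_dvd_mul_left hd
    have h5 : ((c + 1 : ℤ) : ZMod (p ^ e)) = 0 := by
      rw [ZMod.intCast_zmod_eq_zero_iff_dvd]
      push_cast
      exact hfin
    push_cast at h5
    linear_combination h5

lemma odd_pow_add (hab : IsCoprime a b) (heven : Even (a * b)) {k : ℕ} (hk : 1 ≤ k) :
    Odd (a ^ k + b ^ k) := by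
  have h2 : ¬ (Even a ∧ Even b) := by
    rintro ⟨⟨x, hx⟩, ⟨y, hy⟩⟩
    have : IsUnit (2 : ℤ) := hab.isUnit_of_dvd' ⟨x, by omega⟩ ⟨y, by omega⟩
    rw [Int.isUnit_iff] at this
    omega
  have hk0 : k ≠ 0 := by omega
  rcases Int.even_mul.mp heven with h | h
  · have hb2 : Odd b := Int.not_even_iff_odd.mp (fun hb => h2 ⟨h, hb⟩)
    exact (h.pow_of_ne_zero hk0).add_odd hb2.pow
  · have ha2 : Odd a := Int.not_even_iff_odd.mp (fun ha => h2 ⟨ha, h⟩)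
    rw [add_comm]
    exact (h.pow_of_ne_zero hk0).add_odd ha2.pow

lemma forward_lemma {d k : ℕ} (hdodd : Odd d) (hdab : IsCoprime (d : ℤ) (a * b))
    (hk : 1 ≤ k) (hdvd : (d : ℤ) ∣ a ^ k + b ^ k) {p : ℕ} (hp : p.Prime) (hpd : p ∣ d) :
    2 ^ (k.factorization 2 + 1) ∣ ordAB a b p ∧
      ¬ 2 ^ (k.factorization 2 + 1 + 1) ∣ ordAB a b p := by
  have hpodd : p ≠ 2 := by
    rintro rfl
    rw [Nat.odd_iff] at hdodd
    omega
  have hp2 : 2 < p := lt_of_le_of_ne hp.two_le (Ne.symm hpodd)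
  have hcop : IsCoprime ((p : ℕ) : ℤ) (a * b) :=
    hdab.of_isCoprime_of_dvd_left (Int.natCast_dvd_natCast.mpr hpd)
  have hca : IsCoprime ((p : ℕ) : ℤ) a := hcop.of_mul_right_left
  have hcb : IsCoprime ((p : ℕ) : ℤ) b := hcop.of_mul_right_right
  have hub : IsUnit ((b : ZMod p)) := isUnit_cast hcb
  have hpk : ((p : ℕ) : ℤ) ∣ a ^ k + b ^ k :=
    dvd_trans (Int.natCast_dvd_natCast.mpr hpd) hdvd
  have hx : ((a : ZMod p) * (b : ZMod p)⁻¹) ^ k = -1 := (dvd_add_iff hub k).mp hpk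
  set x := (a : ZMod p) * (b : ZMod p)⁻¹ with hxdef
  haveI : Fact (2 < p) := ⟨hp2⟩
  have hne : (-1 : ZMod p) ≠ 1 := ZMod.neg_one_ne_one
  have h1 : ¬ orderOf x ∣ k := by
    intro h
    exact hne (hx ▸ (orderOf_dvd_iff_pow_eq_one.mp h))
  have h2 : orderOf x ∣ 2 * k := by
    rw [orderOf_dvd_iff_pow_eq_one, mul_comm, pow_mul, hx]
    exact neg_one_sq
  have ht0 : orderOf x ≠ 0 := (ordAB_pos hp.pos.ne' hca hcb).ne'
  have hv2 := v2_eq_of_dvd ht0 (by omega) h2 h1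
  constructor
  · exact (Nat.Prime.pow_dvd_iff_le_factorization Nat.prime_two ht0).mpr (le_of_eq hv2.symm)
  · intro h
    have := (Nat.Prime.pow_dvd_iff_le_factorization Nat.prime_two ht0).mp h
    omega

lemma reverse_lemma {d : ℕ} (hdodd : Odd d) (hd : 0 < d) (hdab : IsCoprime (d : ℤ) (a * b))
    {s : ℕ} (hs : 1 ≤ s)
    (hsp : ∀ p : ℕ, p.Prime → p ∣ d →
      2 ^ s ∣ ordAB a b p ∧ ¬ 2 ^ (s + 1) ∣ ordAB a b p) :
    ∃ k : ℕ, 1 ≤ k ∧ (d : ℤ) ∣ a ^ k + b ^ k := by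
  classical
  have hd0 : d ≠ 0 := hd.ne'
  -- coprimality helpers
  have coprime_a : ∀ p : ℕ, p ∣ d → IsCoprime ((p : ℕ) : ℤ) a := fun p hpd =>
    (hdab.of_isCoprime_of_dvd_left (Int.natCast_dvd_natCast.mpr hpd)).of_mul_right_left
  have coprime_b : ∀ p : ℕ, p ∣ d → IsCoprime ((p : ℕ) : ℤ) b := fun p hpd =>
    (hdab.of_isCoprime_of_dvd_left (Int.natCast_dvd_natCast.mpr hpd)).of_mul_right_right
  set N : ℕ := ∏ p ∈ d.primeFactors, (ordAB a b p * p ^ d.factorization p) with hNdef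
  have hN0 : N ≠ 0 := by
    rw [hNdef]
    rw [Finset.prod_ne_zero_iff]
    intro p hpmem
    obtain ⟨hpp, hpd, -⟩ := Nat.mem_primeFactors.mp hpmem
    exact mul_ne_zero (ordAB_pos hpp.pos.ne' (coprime_a p hpd) (coprime_b p hpd)).ne'
      (pow_ne_zero _ hpp.pos.ne')
  set U : ℕ := N / 2 ^ N.factorization 2 with hUdef
  have hU0 : U ≠ 0 := (Nat.ordCompl_pos 2 hN0).ne'
  have hUodd : ¬ 2 ∣ U := Nat.not_dvd_ordCompl Nat.prime_two hN0
  have hUf2 : U.factorization 2 = 0 := Nat.factorization_eq_zero_of_not_dvd hUodd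
  have hUfq : ∀ q : ℕ, q ≠ 2 → U.factorization q = N.factorization q := by
    intro q hq
    rw [hUdef, Nat.factorization_ordCompl]
    exact Finsupp.erase_ne hq
  set k : ℕ := 2 ^ (s - 1) * U with hkdef
  have hk0 : k ≠ 0 := mul_ne_zero (pow_ne_zero _ two_ne_zero) hU0
  have hkf2 : k.factorization 2 = s - 1 := by
    rw [hkdef, Nat.factorization_mul (pow_ne_zero _ two_ne_zero) hU0]
    simp [Nat.Prime.factorization_pow Nat.prime_two, hUf2]
  have h2k : 2 * k = 2 ^ s * U := by
    rw [hkdef, ← mul_assoc, ← pow_succ']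
    congr 2
    omega
  refine ⟨k, Nat.one_le_iff_ne_zero.mpr hk0, ?_⟩
  rw [Int.natCast_dvd]
  rw [Nat.dvd_iff_prime_pow_dvd_dvd]
  intro p e hpp hped
  rcases Nat.eq_zero_or_pos e with rfl | he
  · simpa using one_dvd _
  -- now 1 ≤ e
  have hpd : p ∣ d := dvd_trans (dvd_pow_self p (by omega)) hped
  have hpodd : p ≠ 2 := by
    rintro rfl
    rw [Nat.odd_iff] at hdodd
    omega
  have hca := coprime_a p hpd
  have hcb := coprime_b p hpd
  have hcbe : IsCoprime (((p ^ e : ℕ)) : ℤ) b := by push_cast; exact hcb.pow_left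
  have hube : IsUnit ((b : ZMod (p ^ e))) := isUnit_cast hcbe
  obtain ⟨hms, hms1⟩ := hsp p hpp hpd
  set m := ordAB a b p with hmdef
  have hm0 : m ≠ 0 := (ordAB_pos hpp.pos.ne' hca hcb).ne'
  have hmf2 : m.factorization 2 = s := by
    have hle := (Nat.Prime.pow_dvd_iff_le_factorization Nat.prime_two hm0).mp hms
    have hlt : ¬ (s + 1 ≤ m.factorization 2) :=
      fun h => hms1 ((Nat.Prime.pow_dvd_iff_le_factorization Nat.prime_two hm0).mpr h)
    omega
  obtain ⟨hmt, htm⟩ := ord_claims hpp he hca hcb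
  set t := ordAB a b (p ^ e) with htdef
  have ht0 : t ≠ 0 := by
    intro h
    rw [h] at htm
    exact mul_ne_zero hm0 (pow_ne_zero _ hpp.pos.ne') (zero_dvd_iff.mp htm)
  have hmp0 : m * p ^ (e - 1) ≠ 0 := mul_ne_zero hm0 (pow_ne_zero _ hpp.pos.ne')
  have htf2 : t.factorization 2 = s := by
    have hle1 : s ≤ t.factorization 2 := by
      have := Finsupp.le_def.mp ((Nat.factorization_le_iff_dvd hm0 ht0).mpr hmt) 2
      omega
    have hle2 : t.factorization 2 ≤ s := by
      have h := Finsupp.le_def.mp ((Nat.factorization_le_iff_dvd ht0 hmp0).mpr htm) 2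
      rw [Nat.factorization_mul hm0 (pow_ne_zero _ hpp.pos.ne')] at h
      have hpf : ((p ^ (e - 1) : ℕ)).factorization 2 = 0 := by
        rw [Nat.Prime.factorization_pow hpp]
        exact Finsupp.single_eq_of_ne' hpodd
      simp only [Finsupp.add_apply, hpf, add_zero, hmf2] at h
      exact h
    omega
  have hed : e ≤ d.factorization p :=
    (Nat.Prime.pow_dvd_iff_le_factorization hpp hd0).mp hped
  have htN : t ∣ N := by
    refine dvd_trans (dvd_trans htm ?_) (Finset.dvd_prod_of_mem _
      (Nat.mem_primeFactors.mpr ⟨hpp, hpd, hd0⟩))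
    exact mul_dvd_mul_left m (pow_dvd_pow p (by omega))
  have htk2 : t ∣ 2 * k := by
    rw [h2k]
    have h2U0 : (2 ^ s * U) ≠ 0 := mul_ne_zero (pow_ne_zero _ two_ne_zero) hU0
    rw [← Nat.factorization_le_iff_dvd ht0 h2U0]
    rw [Finsupp.le_def]
    intro q
    rw [Nat.factorization_mul (pow_ne_zero _ two_ne_zero) hU0]
    rw [Nat.Prime.factorization_pow Nat.prime_two]
    by_cases hq : q = 2
    · subst hq
      simp [htf2, hUf2]
    · have h1 := Finsupp.le_def.mp ((Nat.factorization_le_iff_dvd ht0 hN0).mpr htN) q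
      simp only [Finsupp.add_apply, Finsupp.single_eq_of_ne' (Ne.symm hq), zero_add,
        hUfq q hq]
      exact h1
  have htnk : ¬ t ∣ k := by
    intro h
    have := Finsupp.le_def.mp ((Nat.factorization_le_iff_dvd ht0 hk0).mpr h) 2
    rw [htf2, hkf2] at this
    omega
  -- conclude
  set x := (a : ZMod (p ^ e)) * (b : ZMod (p ^ e))⁻¹ with hxdef
  have hx2k : x ^ (2 * k) = 1 := orderOf_dvd_iff_pow_eq_one.mp htk2
  have hxk1 : x ^ k ≠ 1 := fun h => htnk (orderOf_dvd_iff_pow_eq_one.mpr h)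
  have hsq : (x ^ k) ^ 2 = 1 := by
    rw [← pow_mul, mul_comm]
    exact hx2k
  have hfin : x ^ k = -1 := eq_neg_one_of_sq hpp hpodd he hsq hxk1
  have := (dvd_add_iff hube k).mpr hfin
  rw [← Int.natCast_dvd]
  exact this

end Aux

theorem good_char_even_case (a b : ℤ) (ha : a ≠ 0) (hb : b ≠ 0) (hab : IsCoprime a b)
    (habeven : Even (a * b)) (β d : ℕ) (hdodd : Odd d) (hd : 0 < d)
    (hdab : IsCoprime (d : ℤ) (a * b)) :
    Good a b (2 ^ β * d) ↔
      ((β = 0 ∧ d = 1) ∨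
       (β = 0 ∧ 3 ≤ d ∧ ∃ s : ℕ, 1 ≤ s ∧ ∀ p : ℕ, p.Prime → p ∣ d →
          2 ^ s ∣ ordAB a b p ∧ ¬ 2 ^ (s + 1) ∣ ordAB a b p)) := by
  constructor
  · rintro ⟨k, hk1, hkd⟩
    have hodd := odd_pow_add hab habeven hk1
    have hβ : β = 0 := by
      by_contra h
      have h2 : (2 : ℤ) ∣ a ^ k + b ^ k := by
        refine dvd_trans ?_ hkd
        have h3 : (2 : ℕ) ∣ 2 ^ β * d := dvd_mul_of_dvd_left (dvd_pow_self 2 h) _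
        exact_mod_cast Int.natCast_dvd_natCast.mpr h3
      obtain ⟨c, hc⟩ := h2
      obtain ⟨c', hc'⟩ := hodd
      omega
    subst hβ
    rw [pow_zero, one_mul] at hkd
    by_cases hd1 : d = 1
    · exact Or.inl ⟨rfl, hd1⟩
    · right
      refine ⟨rfl, ?_, k.factorization 2 + 1, Nat.le_add_left 1 _, ?_⟩
      · rcases hdodd with ⟨j, hj⟩
        omega
      · intro p hp hpd
        exact forward_lemma hdodd hdab hk1 hkd hp hpd
  · rintro (⟨hβ, hd1⟩ | ⟨hβ, hd3, s, hs1, hsp⟩)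
    · subst hβ; subst hd1
      exact ⟨1, le_refl 1, by norm_num⟩
    · subst hβ
      obtain ⟨k, hk1, hkd⟩ := reverse_lemma hdodd hd hdab hs1 hsp
      exact ⟨k, hk1, by rwa [pow_zero, one_mul]⟩
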